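/- Let G be a bipartite graph with left part A of size k and right part B of size ρ, such that every vertex of A has degree at least 2 and G has girth at least 8 (no cycles of length 4 or 6). Then ρ ≥ 2√k, equivalently k ≤ ρ²/4. -/

import Mathlib

open SimpleGraph Finset


/-- Redundancy bound for graph-based asynchronous batch codes with `t = 3`: if `G` is a
bipartite graph with left part `A` of size `k` and right part `B` of size `ρ`, every
vertex of `A` has degree at least `2`, and `G` has girth at least `8`, then
`ρ ≥ 2√k`, equivalently `k ≤ ρ²/4`. -/
theorem redundancy_lower_bound {A B : Type*} [Fintype A] [Fintype B]
    (G : SimpleGraph (A ⊕ B)) [DecidableRel G.Adj]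
    (hbipA : ∀ a a' : A, ¬ G.Adj (Sum.inl a) (Sum.inl a'))
    (hbipB : ∀ b b' : B, ¬ G.Adj (Sum.inr b) (Sum.inr b'))
    (hdeg : ∀ a : A, 2 ≤ G.degree (Sum.inl a))
    (hgirth : 8 ≤ G.girth) :
    2 * Real.sqrt (Fintype.card A) ≤ Fintype.card B ∧
    (Fintype.card A : ℝ) ≤ (Fintype.card B : ℝ) ^ 2 / 4 := by
  classical
  set k := Fintype.card A with hk
  set n := Fintype.card B with hn
  -- every cycle has length ≥ 8
  have hcyc : ∀ (v : A ⊕ B) (w : G.Walk v v), w.IsCycle → 8 ≤ w.length := by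
    intro v w hw
    have hna : ¬ G.IsAcyclic := fun hac => hac _ hw
    have h1 : G.egirth ≠ ⊤ := by simpa [egirth_eq_top] using hna
    have h2 : (8 : ℕ∞) ≤ G.egirth := by
      rw [← ENat.coe_toNat h1]; exact_mod_cast hgirth
    exact_mod_cast le_egirth.mp h2 v w hw
  -- no 4-cycle
  have no4 : ∀ {a a' : A} {b b' : B}, a ≠ a' → b ≠ b' →
      G.Adj (Sum.inl a) (Sum.inr b) → G.Adj (Sum.inl a) (Sum.inr b') →
      G.Adj (Sum.inl a') (Sum.inr b) → G.Adj (Sum.inl a') (Sum.inr b') → False := by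
    intro a a' b b' haa hbb h1 h2 h3 h4
    let w : G.Walk (Sum.inl a) (Sum.inl a) :=
      Walk.cons h1 (Walk.cons h3.symm (Walk.cons h4 (Walk.cons h2.symm Walk.nil)))
    have hw : w.IsCycle := by
      constructor
      · constructor
        · rw [Walk.isTrail_def]
          simp [w, Sym2.eq_iff]
          aesop
        · simp [w]
      · simp [w]
        aesop
    have := hcyc _ w hw
    simp [w] at this
  -- no 6-cycle
  have no6 : ∀ {a1 a2 a3 : A} {x y z : B}, a1 ≠ a2 → a1 ≠ a3 → a2 ≠ a3 →
      x ≠ y → x ≠ z → y ≠ z →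
      G.Adj (Sum.inl a1) (Sum.inr x) → G.Adj (Sum.inl a1) (Sum.inr y) →
      G.Adj (Sum.inl a2) (Sum.inr y) → G.Adj (Sum.inl a2) (Sum.inr z) →
      G.Adj (Sum.inl a3) (Sum.inr z) → G.Adj (Sum.inl a3) (Sum.inr x) → False := by
    intro a1 a2 a3 x y z h12 h13 h23 hxy hxz hyz e1 e2 e3 e4 e5 e6
    let w : G.Walk (Sum.inl a1) (Sum.inl a1) :=
      Walk.cons e2 (Walk.cons e3.symm (Walk.cons e4 (Walk.cons e5.symm
        (Walk.cons e6 (Walk.cons e1.symm Walk.nil)))))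
    have hw : w.IsCycle := by
      constructor
      · constructor
        · rw [Walk.isTrail_def]
          simp [w, Sym2.eq_iff]
          aesop
        · simp [w]
      · simp [w]
        aesop
    have := hcyc _ w hw
    simp [w] at this
  -- choose two distinct neighbors of each a : A, both in B
  have hex : ∀ a : A, ∃ x y : B, x ≠ y ∧ G.Adj (Sum.inl a) (Sum.inr x) ∧
      G.Adj (Sum.inl a) (Sum.inr y) := by
    intro a
    have h2 : 1 < (G.neighborFinset (Sum.inl a)).card := by
      have := hdeg a; rw [← G.card_neighborFinset_eq_degree] at this; omega
    obtain ⟨u, hu, v, hv, huv⟩ := Finset.one_lt_card.mp h2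
    rw [mem_neighborFinset] at hu hv
    obtain ⟨x, rfl⟩ : ∃ x : B, u = Sum.inr x := by
      cases u with
      | inl a' => exact absurd hu (hbipA a a')
      | inr x => exact ⟨x, rfl⟩
    obtain ⟨y, rfl⟩ : ∃ y : B, v = Sum.inr y := by
      cases v with
      | inl a' => exact absurd hv (hbipA a a')
      | inr y => exact ⟨y, rfl⟩
    exact ⟨x, y, fun h => huv (by rw [h]), hu, hv⟩
  choose p q hpq hp hq using hex
  -- pair injectivity
  have hinj : ∀ (a a' : A) (x y : B), x ≠ y →
      G.Adj (Sum.inl a) (Sum.inr x) → G.Adj (Sum.inl a) (Sum.inr y) →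
      G.Adj (Sum.inl a') (Sum.inr x) → G.Adj (Sum.inl a') (Sum.inr y) → a = a' := by
    intro a a' x y hxy h1 h2 h3 h4
    by_contra hne
    exact no4 hne hxy h1 h2 h3 h4
  -- "degree" of b in the pair system
  let D : B → Finset A := fun b => Finset.univ.filter (fun a => b = p a ∨ b = q a)
  let d : B → ℕ := fun b => (D b).card
  have hDmem : ∀ (b : B) (a : A), a ∈ D b ↔ (b = p a ∨ b = q a) := by
    intro b a; simp [D]
  -- the "other endpoint" map
  let other : A → B → B := fun a b => if b = p a then q a else p a
  have hother_adj : ∀ (a : A) (b : B), G.Adj (Sum.inl a) (Sum.inr (other a b)) := by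
    intro a b
    by_cases h : b = p a
    · simp only [other, if_pos h]; exact hq a
    · simp only [other, if_neg h]; exact hp a
  have hother_ne : ∀ (a : A) (b : B), a ∈ D b → other a b ≠ b := by
    intro a b hab
    rcases (hDmem b a).mp hab with h | h
    · simp only [other, h, if_pos rfl]; exact fun hc => hpq a (h ▸ hc.symm)
    · by_cases h' : b = p a
      · simp only [other, if_pos h']; exact fun hc => hpq a (h' ▸ hc.symm)
      · simp only [other, if_neg h']; exact fun hc => h' (h ▸ hc.symm) |>.elim
  have hadj_of_mem : ∀ (a : A) (b : B), a ∈ D b → G.Adj (Sum.inl a) (Sum.inr b) := by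
    intro a b hab
    rcases (hDmem b a).mp hab with h | h
    · rw [h]; exact hp a
    · rw [h]; exact hq a
  -- row bound
  have hrow : ∀ a : A, d (p a) + d (q a) ≤ n := by
    intro a
    set x := p a
    set y := q a
    have hxy : x ≠ y := hpq a
    have hinj1 : Set.InjOn (fun a' => other a' x) (D x) := by
      intro a1 h1 a2 h2 heq
      simp only at heq
      exact hinj a1 a2 x (other a1 x) (Ne.symm (hother_ne a1 x h1))
        (hadj_of_mem a1 x h1) (hother_adj a1 x) (hadj_of_mem a2 x h2)
        (heq ▸ hother_adj a2 x)
    have hinj2 : Set.InjOn (fun a' => other a' y) (D y) := by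
      intro a1 h1 a2 h2 heq
      simp only at heq
      exact hinj a1 a2 y (other a1 y) (Ne.symm (hother_ne a1 y h1))
        (hadj_of_mem a1 y h1) (hother_adj a1 y) (hadj_of_mem a2 y h2)
        (heq ▸ hother_adj a2 y)
    have hdisj : Disjoint ((D x).image (fun a' => other a' x))
        ((D y).image (fun a' => other a' y)) := by
      rw [Finset.disjoint_left]
      intro z hz1 hz2
      obtain ⟨a1, ha1, hz1'⟩ := Finset.mem_image.mp hz1
      obtain ⟨a2, ha2, hz2'⟩ := Finset.mem_image.mp hz2
      -- z = other a1 x = other a2 y, a1 ∈ D x, a2 ∈ D y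
      have hzx : z ≠ x := hz1' ▸ hother_ne a1 x ha1
      have hzy : z ≠ y := hz2' ▸ hother_ne a2 y ha2
      -- a ≠ a1 : if a1 = a then other a x = q a = y = z, contradiction
      have haa1 : a ≠ a1 := by
        rintro rfl
        apply hzy
        rw [← hz1']
        simp [other, x]
        rfl
      have haa2 : a ≠ a2 := by
        rintro rfl
        apply hzx
        rw [← hz2']
        simp only [other]
        rw [if_neg (Ne.symm hxy)]
      have ha12 : a1 ≠ a2 := by
        rintro rfl
        -- a1 adjacent to x, z via D x / other; also to y, z. Then pairs force x = y.
        rcases (hDmem x a1).mp ha1 with h | h <;> rcases (hDmem y a1).mp ha2 with h' | h'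
        · exact hxy (h.trans h'.symm)
        · -- x = p a1, y = q a1; z = other a1 x = q a1 = y
          apply hzy; rw [← hz1']; simp [other, ← h, h']
        · -- x = q a1, y = p a1 : z = other a1 x = p a1 = y
          apply hzy; rw [← hz1']
          have hne : x ≠ p a1 := fun hc => hpq a1 (hc.symm.trans h)
          simp only [other, if_neg hne]
          exact h'.symm
        · exact hxy (h.trans h'.symm)
      -- 6-cycle: a ~ x,y ; a2 ~ y,z ; a1 ~ z,x
      exact no6 haa2 haa1 (Ne.symm ha12) hxy (Ne.symm hzx) (Ne.symm hzy)
        (hp a) (hq a) (hadj_of_mem a2 y ha2) (hz2' ▸ hother_adj a2 y)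
        (hz1' ▸ hother_adj a1 x) (hadj_of_mem a1 x ha1)
    calc d x + d y
        = ((D x).image (fun a' => other a' x)).card
          + ((D y).image (fun a' => other a' y)).card := by
          rw [Finset.card_image_of_injOn hinj1, Finset.card_image_of_injOn hinj2]
      _ = (((D x).image (fun a' => other a' x))
          ∪ ((D y).image (fun a' => other a' y))).card := (Finset.card_union_of_disjoint hdisj).symm
      _ ≤ (Finset.univ : Finset B).card := Finset.card_le_card (Finset.subset_univ _)
      _ = n := Finset.card_univ
  -- sum of degrees = 2k
  have hfilter_pair : ∀ a : A,
      (Finset.univ.filter (fun b => b = p a ∨ b = q a)) = {p a, q a} := by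
    intro a; ext b; simp [or_comm, eq_comm]
  have hsum : ∑ b, d b = 2 * k := by
    have e1 : ∑ b, d b = ∑ b, ∑ a : A, if b = p a ∨ b = q a then 1 else 0 := by
      refine Finset.sum_congr rfl fun b _ => ?_
      simp only [d, D]
      exact Finset.card_filter _ _
    rw [e1, Finset.sum_comm]
    have e2 : ∀ a : A, (∑ b : B, if b = p a ∨ b = q a then 1 else 0) = 2 := by
      intro a
      rw [← Finset.sum_filter, hfilter_pair a, Finset.sum_pair (hpq a)]
    rw [Finset.sum_congr rfl fun a _ => e2 a]
    simp [hk, mul_comm]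
  -- sum of squares ≤ k * n
  have hsq : ∑ b, d b ^ 2 ≤ k * n := by
    have h1 : ∑ b, d b ^ 2 = ∑ a : A, (d (p a) + d (q a)) := by
      have e1 : ∀ b : B, d b ^ 2 = ∑ a : A, if b = p a ∨ b = q a then d b else 0 := by
        intro b
        rw [← Finset.sum_filter]
        have : (Finset.univ.filter (fun a : A => b = p a ∨ b = q a)) = D b := rfl
        rw [this, Finset.sum_const, smul_eq_mul, sq]
      rw [Finset.sum_congr rfl fun b _ => e1 b, Finset.sum_comm]
      refine Finset.sum_congr rfl fun a _ => ?_
      rw [← Finset.sum_filter, hfilter_pair a, Finset.sum_pair (hpq a)]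
    rw [h1]
    calc ∑ a : A, (d (p a) + d (q a)) ≤ ∑ _a : A, n := Finset.sum_le_sum fun a _ => hrow a
      _ = k * n := by rw [Finset.sum_const, smul_eq_mul, hk, Finset.card_univ]
  -- Cauchy–Schwarz
  have hcs : (∑ b, d b) ^ 2 ≤ n * ∑ b, d b ^ 2 := by
    have := sq_sum_le_card_mul_sum_sq (s := (Finset.univ : Finset B)) (f := d)
    simpa [hn] using this
  have key : 4 * k ≤ n ^ 2 := by
    rcases Nat.eq_zero_or_pos k with hk0 | hk0
    · simp [hk0]
    · have h1 : (2 * k) ^ 2 ≤ n * (k * n) := by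
        calc (2 * k) ^ 2 = (∑ b, d b) ^ 2 := by rw [hsum]
          _ ≤ n * ∑ b, d b ^ 2 := hcs
          _ ≤ n * (k * n) := Nat.mul_le_mul_left n hsq
      have h2 : 4 * k * k ≤ n ^ 2 * k := by ring_nf; ring_nf at h1; omega
      exact Nat.le_of_mul_le_mul_right h2 hk0
  -- conclude
  have keyR : 4 * (k : ℝ) ≤ (n : ℝ) ^ 2 := by exact_mod_cast key
  constructor
  · have h1 : Real.sqrt (k : ℝ) ≤ Real.sqrt ((n : ℝ) ^ 2 / 4) := by
      apply Real.sqrt_le_sqrt; linarith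
    have h2 : Real.sqrt ((n : ℝ) ^ 2 / 4) = (n : ℝ) / 2 := by
      rw [show ((n : ℝ) ^ 2 / 4) = ((n : ℝ) / 2) ^ 2 by ring,
        Real.sqrt_sq (by positivity)]
    rw [h2] at h1
    rw [hk, hn] at *
    linarith
  · rw [hk, hn] at *
    linarith
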